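/- A finite simple graph G is 3-colorable if and only if there exists a Hermitian positive semidefinite complex matrix A, with rows and columns indexed by the vertices of G', such that rank(A) ≤ 3 and A fits G'. -/

import Mathlib

open Matrix
open scoped ComplexOrder

/-- Vertices of the graph `G'`: the original vertices of `G` together with, for every
pair `{i,j}` of distinct vertices (represented as `i < j`), four new gadget vertices
`a_{ij}, b_{ij}, c_{ij}, d_{ij}` encoded as `Fin 4` (`0 = a`, `1 = b`, `2 = c`, `3 = d`). -/
abbrev GVert (n : ℕ) := Fin n ⊕ ({p : Fin n × Fin n // p.1 < p.2} × Fin 4)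

/-- The edges of `G'`: the original edges of `G`, and for every pair `i < j` the nine
gadget edges `{i,a},{i,b},{i,d},{a,b},{a,j},{b,c},{c,d},{c,j},{d,j}`. -/
def gadgetRel {n : ℕ} (G : SimpleGraph (Fin n)) : GVert n → GVert n → Prop
  | Sum.inl i, Sum.inl j => G.Adj i j
  | Sum.inl v, Sum.inr (⟨(i, j), _⟩, k) =>
      (v = i ∧ (k = 0 ∨ k = 1 ∨ k = 3)) ∨ (v = j ∧ (k = 0 ∨ k = 2 ∨ k = 3))
  | Sum.inr (p, k), Sum.inr (q, l) =>
      p = q ∧ ((k = 0 ∧ l = 1) ∨ (k = 1 ∧ l = 2) ∨ (k = 2 ∧ l = 3))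
  | _, _ => False

/-- The graph `G'` obtained from `G` by inserting the gadget `H_{ij}` for every pair of
distinct vertices `i, j` of `G`. -/
def gadgetGraph {n : ℕ} (G : SimpleGraph (Fin n)) : SimpleGraph (GVert n) :=
  SimpleGraph.fromRel (gadgetRel G)

/-- The triangle decoration `Δ(H)` of a graph `H`: each vertex `w` becomes the triangle
`(w,1),(w,2),(w,3)` (here `(w,0),(w,1),(w,2)`), with `(w,0)` identified with `w`. -/
def triDec {W : Type*} (H : SimpleGraph W) : SimpleGraph (W × Fin 3) :=
  SimpleGraph.fromRel fun a b =>
    (a.2 = 0 ∧ b.2 = 0 ∧ H.Adj a.1 b.1) ∨ (a.1 = b.1 ∧ a.2 ≠ b.2)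

/-- A matrix `A` fits a graph `H` if all its diagonal entries are `1` and `A v w = 0`
whenever `{v,w}` is an edge of `H`. -/
def Fits {V R : Type*} [Zero R] [One R] (H : SimpleGraph V) (A : Matrix V V R) : Prop :=
  (∀ v, A v v = 1) ∧ ∀ v w, H.Adj v w → A v w = 0

section Aux

def gcol (x y : Fin 3) : Fin 4 → Fin 3 :=
  if x = y then ![x+1, x+2, x+1, x+2] else ![-(x+y), y, x, -(x+y)]

lemma gcol_spec : ∀ x y : Fin 3, gcol x y 0 ≠ x ∧ gcol x y 1 ≠ x ∧ gcol x y 3 ≠ x ∧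
    gcol x y 0 ≠ y ∧ gcol x y 2 ≠ y ∧ gcol x y 3 ≠ y ∧
    gcol x y 0 ≠ gcol x y 1 ∧ gcol x y 1 ≠ gcol x y 2 ∧ gcol x y 2 ≠ gcol x y 3 := by
  decide

def gExt {n : ℕ} (C : Fin n → Fin 3) : GVert n → Fin 3
  | Sum.inl v => C v
  | Sum.inr (⟨(i, j), _⟩, k) => gcol (C i) (C j) k

lemma gExt_valid {n : ℕ} {G : SimpleGraph (Fin n)} (C : G.Coloring (Fin 3)) :
    ∀ v w, gadgetRel G v w → gExt C v ≠ gExt C w := by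
  intro v w h
  match v, w with
  | Sum.inl i, Sum.inl j => exact C.valid h
  | Sum.inl v, Sum.inr (⟨(i, j), hij⟩, k) =>
      obtain ⟨rfl, hk⟩ | ⟨rfl, hk⟩ := h <;>
        [obtain ⟨h1,h2,h3,h4,h5,h6,h7,h8,h9⟩ := gcol_spec (C v) (C j);
         obtain ⟨h1,h2,h3,h4,h5,h6,h7,h8,h9⟩ := gcol_spec (C i) (C v)] <;>
        rcases hk with rfl | rfl | rfl <;> simp only [gExt] <;> tauto
  | Sum.inr (p, k), Sum.inr (q, l) =>
      obtain ⟨rfl, hk⟩ := h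
      obtain ⟨⟨i, j⟩, hij⟩ := p
      obtain ⟨h1,h2,h3,h4,h5,h6,h7,h8,h9⟩ := gcol_spec (C i) (C j)
      rcases hk with ⟨rfl, rfl⟩ | ⟨rfl, rfl⟩ | ⟨rfl, rfl⟩ <;> simp only [gExt] <;> tauto
  | Sum.inr _, Sum.inl _ => exact absurd h (by simp [gadgetRel])

lemma forwardDir {n : ℕ} {G : SimpleGraph (Fin n)} (h : G.Colorable 3) :
    ∃ A : Matrix (GVert n) (GVert n) ℂ, A.PosSemidef ∧ A.rank ≤ 3 ∧
    ((∀ v, A v v = 1) ∧ ∀ v w, (gadgetGraph G).Adj v w → A v w = 0) := by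
  obtain ⟨C⟩ := h
  set c := gExt C with hc
  set B : Matrix (Fin 3) (GVert n) ℂ := fun k v => if c v = k then 1 else 0 with hB
  have key : ∀ v w, (Bᴴ * B) v w = if c v = c w then 1 else 0 := by
    intro v w
    rw [Matrix.mul_apply]
    simp only [conjTranspose_apply]
    simp only [hB, apply_ite (star : ℂ → ℂ), star_one, star_zero]
    rw [Finset.sum_eq_single (c v)]
    · simp [eq_comm]
    · intro k _ hk; simp [Ne.symm hk]
    · simp
  refine ⟨Bᴴ * B, posSemidef_conjTranspose_mul_self B, ?_, ?_, ?_⟩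
  · rw [Matrix.rank_conjTranspose_mul_self]
    simpa using B.rank_le_card_height
  · intro v; simp [key]
  · intro v w hvw
    rw [key, if_neg]
    rcases hvw with ⟨hne, h | h⟩
    · exact gExt_valid C v w h
    · exact fun e => (gExt_valid C w v h) e.symm

section Geometry
open Module
variable {E : Type*} [NormedAddCommGroup E] [InnerProductSpace ℂ E] [FiniteDimensional ℂ E]

local notation "⟪" x ", " y "⟫" => @inner ℂ _ _ x y

/-- If c,d,j is an orthonormal triple in a submodule W of dimension ≤ 3, any x ∈ W
expands in terms of them. -/
lemma expand3 (W : Submodule ℂ E) (hW : finrank ℂ W ≤ 3)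
    {c d j : E} (hcW : c ∈ W) (hdW : d ∈ W) (hjW : j ∈ W)
    (hcc : ⟪c, c⟫ = 1) (hdd : ⟪d, d⟫ = 1) (hjj : ⟪j, j⟫ = 1)
    (hcd : ⟪c, d⟫ = 0) (hcj : ⟪c, j⟫ = 0) (hdj : ⟪d, j⟫ = 0)
    {x : E} (hx : x ∈ W) :
    x = ⟪c, x⟫ • c + ⟪d, x⟫ • d + ⟪j, x⟫ • j := by
  set y := x - (⟪c, x⟫ • c + ⟪d, x⟫ • d + ⟪j, x⟫ • j) with hy
  have hdc : ⟪d, c⟫ = 0 := by rw [← inner_conj_symm, hcd]; simp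
  have hjc : ⟪j, c⟫ = 0 := by rw [← inner_conj_symm, hcj]; simp
  have hjd : ⟪j, d⟫ = 0 := by rw [← inner_conj_symm, hdj]; simp
  have hyc : ⟪c, y⟫ = 0 := by
    simp [hy, inner_sub_right, inner_add_right, inner_smul_right, hcc, hcd, hcj, -inner_self_eq_norm_sq_to_K]
  have hyd : ⟪d, y⟫ = 0 := by
    simp [hy, inner_sub_right, inner_add_right, inner_smul_right, hdd, hdc, hdj, -inner_self_eq_norm_sq_to_K]
  have hyj : ⟪j, y⟫ = 0 := by
    simp [hy, inner_sub_right, inner_add_right, inner_smul_right, hjj, hjc, hjd, -inner_self_eq_norm_sq_to_K]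
  have hyzero : y = 0 := by
    by_contra hne
    have hyW : y ∈ W := by
      refine Submodule.sub_mem _ hx ?_
      exact Submodule.add_mem _ (Submodule.add_mem _ (Submodule.smul_mem _ _ hcW)
        (Submodule.smul_mem _ _ hdW)) (Submodule.smul_mem _ _ hjW)
    set z : E := (‖y‖ : ℂ)⁻¹ • y with hz
    have hzW : z ∈ W := Submodule.smul_mem _ _ hyW
    have hnorm : ‖y‖ ≠ 0 := norm_ne_zero_iff.mpr hne
    have hzz : ⟪z, z⟫ = 1 := by
      rw [hz, inner_smul_left, inner_smul_right, inner_self_eq_norm_sq_to_K]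
      have h0 : ((‖y‖ : ℂ)) ≠ 0 := by exact_mod_cast hnorm
      simp
      field_simp
    set f : Fin 4 → E := fun k => if k = 0 then c else if k = 1 then d else if k = 2 then j else z with hf
    have horth : Orthonormal ℂ f := by
      rw [orthonormal_iff_ite]
      have hcz : ⟪c, z⟫ = 0 := by simp [hz, inner_smul_right, hyc]
      have hdz : ⟪d, z⟫ = 0 := by simp [hz, inner_smul_right, hyd]
      have hjz : ⟪j, z⟫ = 0 := by simp [hz, inner_smul_right, hyj]
      have hzc : ⟪z, c⟫ = 0 := by rw [← inner_conj_symm, hcz]; simp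
      have hzd : ⟪z, d⟫ = 0 := by rw [← inner_conj_symm, hdz]; simp
      have hzj : ⟪z, j⟫ = 0 := by rw [← inner_conj_symm, hjz]; simp
      intro i k
      fin_cases i <;> fin_cases k <;>
        simp [hf, hcc, hdd, hjj, hzz, hcd, hcj, hdj, hdc, hjc, hjd, hcz, hdz, hjz, hzc, hzd, hzj, -inner_self_eq_norm_sq_to_K]
    have hli : LinearIndependent ℂ f := horth.linearIndependent
    set g : Fin 4 → W := fun k => ⟨f k, by fin_cases k <;> simp [hf] <;> assumption⟩ with hg
    have hlig : LinearIndependent ℂ g := by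
      apply LinearIndependent.of_comp W.subtype
      convert hli
      rfl
    have := hlig.fintype_card_le_finrank
    simp at this
    omega
  exact sub_eq_zero.mp hyzero

lemma conj0 {u v : E} (h : ⟪u, v⟫ = 0) : ⟪v, u⟫ = 0 := by
  rw [← inner_conj_symm, h]; simp

lemma gadget_dichotomy (W : Submodule ℂ E) (hW : finrank ℂ W ≤ 3)
    {i a b c d j : E}
    (hiW : i ∈ W) (haW : a ∈ W) (hbW : b ∈ W) (hcW : c ∈ W) (hdW : d ∈ W) (hjW : j ∈ W)
    (hii : ⟪i, i⟫ = 1) (haa : ⟪a, a⟫ = 1) (hbb : ⟪b, b⟫ = 1)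
    (hcc : ⟪c, c⟫ = 1) (hdd : ⟪d, d⟫ = 1) (hjj : ⟪j, j⟫ = 1)
    (hia : ⟪i, a⟫ = 0) (hib : ⟪i, b⟫ = 0) (hid : ⟪i, d⟫ = 0)
    (hab : ⟪a, b⟫ = 0) (haj : ⟪a, j⟫ = 0) (hbc : ⟪b, c⟫ = 0)
    (hcd : ⟪c, d⟫ = 0) (hcj : ⟪c, j⟫ = 0) (hdj : ⟪d, j⟫ = 0) :
    ⟪i, j⟫ = 0 ∨ ∃ t : ℂ, j = t • i := by
  by_cases hij : ⟪i, j⟫ = 0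
  · exact Or.inl hij
  right
  have expand := fun x hx => expand3 W hW hcW hdW hjW hcc hdd hjj hcd hcj hdj (x := x) hx
  have hdi : ⟪d, i⟫ = 0 := conj0 hid
  have hi : i = ⟪c, i⟫ • c + ⟪j, i⟫ • j := by
    have := expand i hiW
    rwa [hdi, zero_smul, add_zero] at this
  set α := ⟪c, i⟫ with hα
  set γ := ⟪j, i⟫ with hγ
  have hγne : γ ≠ 0 := by
    intro h
    apply hij
    rw [← inner_conj_symm, hγ.symm.trans h]
    simp
  by_cases hαz : α = 0
  · refine ⟨γ⁻¹, ?_⟩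
    rw [hαz, zero_smul, zero_add] at hi
    rw [hi, smul_smul, inv_mul_cancel₀ hγne, one_smul]
  · exfalso
    -- a ⟂ c
    have hai : ⟪a, i⟫ = 0 := conj0 hia
    have hac : ⟪a, c⟫ = 0 := by
      have : ⟪a, i⟫ = α * ⟪a, c⟫ + γ * ⟪a, j⟫ := by
        rw [hi]; simp [inner_add_right, inner_smul_right]
      rw [hai, haj, mul_zero, add_zero] at this
      exact (mul_eq_zero.mp this.symm).resolve_left hαz
    -- a = t • d
    have ha : a = ⟪d, a⟫ • d := by
      have := expand a haW
      rwa [conj0 hac, conj0 haj, zero_smul, zero_smul, zero_add, add_zero] at this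
    have htne : ⟪d, a⟫ ≠ 0 := by
      intro h0
      rw [h0, zero_smul] at ha
      rw [ha] at haa
      simp at haa
    -- d ⟂ b
    have hdb : ⟪d, b⟫ = 0 := by
      have : ⟪a, b⟫ = (starRingEnd ℂ) ⟪d, a⟫ * ⟪d, b⟫ := by
        conv_lhs => rw [ha]
        rw [inner_smul_left]
      rw [hab] at this
      have := (mul_eq_zero.mp this.symm).resolve_left (by rw [starRingEnd_apply]; exact star_ne_zero.mpr htne)
      exact this
    -- b = s • j
    have hb : b = ⟪j, b⟫ • j := by
      have := expand b hbW
      rwa [conj0 hbc, hdb, zero_smul, zero_smul, zero_add, zero_add] at this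
    have hsne : ⟪j, b⟫ ≠ 0 := by
      intro h0
      rw [h0, zero_smul] at hb
      rw [hb] at hbb
      simp at hbb
    -- contradiction: ⟪b, i⟫ = conj s * γ ≠ 0 but = 0
    have hbi : ⟪b, i⟫ = 0 := conj0 hib
    have : ⟪b, i⟫ = (starRingEnd ℂ) ⟪j, b⟫ * γ := by
      conv_lhs => rw [hb, hi]
      rw [inner_smul_left, inner_add_right, inner_smul_right, inner_smul_right, conj0 hcj, hjj]
      ring
    rw [hbi] at this
    exact hγne ((mul_eq_zero.mp this.symm).resolve_left (by rw [starRingEnd_apply]; exact star_ne_zero.mpr hsne))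

end Geometry

local notation "⟪" x ", " y "⟫" => @inner ℂ _ _ x y

open Module MatrixOrder in
lemma reverseDir {n : ℕ} {G : SimpleGraph (Fin n)}
    (A : Matrix (GVert n) (GVert n) ℂ) (hA : A.PosSemidef) (hrk : A.rank ≤ 3)
    (hF : Fits (gadgetGraph G) A) : G.Colorable 3 := by
  classical
  set S := CFC.sqrt A with hSdef
  have hSherm : Sᴴ = S := (CFC.sqrt_nonneg A).posSemidef.1
  have hSS : Sᴴ * S = A := by rw [hSherm]; exact CFC.sqrt_mul_sqrt_self A hA.nonneg
  -- the vectors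
  set vv : GVert n → EuclideanSpace ℂ (GVert n) :=
    fun x => (WithLp.equiv 2 _).symm (Sᵀ x) with hvv
  have hinner : ∀ x y, ⟪vv x, vv y⟫ = A x y := by
    intro x y
    rw [PiLp.inner_apply, ← hSS, Matrix.mul_apply]
    refine Finset.sum_congr rfl fun u _ => ?_
    rw [RCLike.inner_apply]
    simp [hvv, Matrix.conjTranspose_apply, Matrix.transpose_apply]
    ring
  -- the span
  set W : Submodule ℂ (EuclideanSpace ℂ (GVert n)) := Submodule.span ℂ (Set.range vv) with hW
  have hmem : ∀ x, vv x ∈ W := fun x => Submodule.subset_span (Set.mem_range_self x)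
  have hWrank : finrank ℂ W ≤ 3 := by
    have h1 : Set.range vv = ⇑(WithLp.linearEquiv 2 ℂ (GVert n → ℂ)).symm '' Set.range Sᵀ := by
      exact Set.range_comp _ _
    have h2 : W = Submodule.map ((WithLp.linearEquiv 2 ℂ (GVert n → ℂ)).symm : (GVert n → ℂ) →ₗ[ℂ] EuclideanSpace ℂ (GVert n))
        (Submodule.span ℂ (Set.range Sᵀ)) := by
      rw [hW, h1]; exact Submodule.span_image _
    have h3 : finrank ℂ W = finrank ℂ (Submodule.span ℂ (Set.range Sᵀ)) := by
      rw [h2]; exact LinearEquiv.finrank_map_eq _ _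
    have h4 : finrank ℂ (Submodule.span ℂ (Set.range Sᵀ)) = S.rank := by
      rw [Matrix.rank, Matrix.range_mulVecLin]
      rfl
    have h5 : S.rank = A.rank := by
      conv_rhs => rw [← hSS]
      rw [Matrix.rank_conjTranspose_mul_self]
    omega
  -- units
  have hunit : ∀ x, ⟪vv x, vv x⟫ = 1 := fun x => (hinner x x).trans (hF.1 x)
  have hne : ∀ x, vv x ≠ 0 := by
    intro x h
    have := hunit x
    rw [h] at this
    simp at this
  -- orthogonality along edges
  have horth : ∀ x y, gadgetRel G x y → ⟪vv x, vv y⟫ = 0 := by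
    intro x y h
    refine (hinner x y).trans (hF.2 x y ?_)
    rw [gadgetGraph, SimpleGraph.fromRel_adj]
    refine ⟨?_, Or.inl h⟩
    rintro rfl
    match x, h with
    | Sum.inl i, h => exact G.loopless.irrefl i h
    | Sum.inr (p, k), ⟨_, h⟩ => rcases h with ⟨rfl, h⟩ | ⟨rfl, h⟩ | ⟨rfl, h⟩ <;> simp at h
  set u : Fin n → EuclideanSpace ℂ (GVert n) := fun i => vv (Sum.inl i) with hu
  -- dichotomy for i < j
  have dich : ∀ i j : Fin n, i < j → ⟪u i, u j⟫ = 0 ∨ ∃ t : ℂ, u j = t • u i := by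
    intro i j hij
    set q : {p : Fin n × Fin n // p.1 < p.2} := ⟨(i, j), hij⟩ with hq
    have e0 : gadgetRel G (Sum.inl i) (Sum.inr (q, 0)) := Or.inl ⟨rfl, Or.inl rfl⟩
    have e1 : gadgetRel G (Sum.inl i) (Sum.inr (q, 1)) := Or.inl ⟨rfl, Or.inr (Or.inl rfl)⟩
    have e3 : gadgetRel G (Sum.inl i) (Sum.inr (q, 3)) := Or.inl ⟨rfl, Or.inr (Or.inr rfl)⟩
    have f0 : gadgetRel G (Sum.inl j) (Sum.inr (q, 0)) := Or.inr ⟨rfl, Or.inl rfl⟩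
    have f2 : gadgetRel G (Sum.inl j) (Sum.inr (q, 2)) := Or.inr ⟨rfl, Or.inr (Or.inl rfl)⟩
    have f3 : gadgetRel G (Sum.inl j) (Sum.inr (q, 3)) := Or.inr ⟨rfl, Or.inr (Or.inr rfl)⟩
    have g01 : gadgetRel G (Sum.inr (q, 0)) (Sum.inr (q, 1)) := ⟨rfl, Or.inl ⟨rfl, rfl⟩⟩
    have g12 : gadgetRel G (Sum.inr (q, 1)) (Sum.inr (q, 2)) := ⟨rfl, Or.inr (Or.inl ⟨rfl, rfl⟩)⟩
    have g23 : gadgetRel G (Sum.inr (q, 2)) (Sum.inr (q, 3)) := ⟨rfl, Or.inr (Or.inr ⟨rfl, rfl⟩)⟩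
    exact gadget_dichotomy W hWrank (hmem _) (hmem _) (hmem _) (hmem _) (hmem _) (hmem _)
      (hunit _) (hunit _) (hunit _) (hunit _) (hunit _) (hunit _)
      (horth _ _ e0) (horth _ _ e1) (horth _ _ e3)
      (horth _ _ g01) (conj0 (horth _ _ f0)) (horth _ _ g12)
      (horth _ _ g23) (conj0 (horth _ _ f2)) (conj0 (horth _ _ f3))
  -- dichotomy for all distinct pairs
  have dich' : ∀ i j : Fin n, i ≠ j → ⟪u i, u j⟫ = 0 ∨ ∃ t : ℂ, u j = t • u i := by
    intro i j hij
    rcases lt_or_gt_of_ne hij with h | h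
    · exact dich i j h
    · rcases dich j i h with h0 | ⟨t, ht⟩
      · exact Or.inl (conj0 h0)
      · right
        have htne : t ≠ 0 := by
          rintro rfl
          rw [zero_smul] at ht
          exact hne _ ht
        exact ⟨t⁻¹, by rw [ht, smul_smul, inv_mul_cancel₀ htne, one_smul]⟩
  -- setoid of parallel vectors
  set s : Setoid (Fin n) := ⟨fun i j => ∃ t : ℂ, u j = t • u i, by
    constructor
    · exact fun i => ⟨1, (one_smul _ _).symm⟩
    · rintro i j ⟨t, ht⟩
      have htne : t ≠ 0 := by
        rintro rfl
        rw [zero_smul] at ht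
        exact hne _ ht
      exact ⟨t⁻¹, by rw [ht, smul_smul, inv_mul_cancel₀ htne, one_smul]⟩
    · rintro i j k ⟨t, ht⟩ ⟨r, hr⟩
      exact ⟨r * t, by rw [hr, ht, smul_smul]⟩⟩ with hs
  haveI : DecidableEq (Quotient s) := Classical.decEq _
  haveI : Fintype (Quotient s) := Fintype.ofSurjective (Quotient.mk s)
    (fun q => Quotient.exists_rep q)
  -- parallel implies nonzero inner product
  have par_inner : ∀ i j : Fin n, (∃ t : ℂ, u j = t • u i) → ⟪u i, u j⟫ ≠ 0 := by
    rintro i j ⟨t, ht⟩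
    have htne : t ≠ 0 := by
      rintro rfl
      rw [zero_smul] at ht
      exact hne _ ht
    rw [ht, inner_smul_right, hunit]
    simpa using htne
  -- coloring
  set C : G.Coloring (Quotient s) := SimpleGraph.Coloring.mk (fun i => Quotient.mk s i) (by
    intro i j hadj heq
    have hrel : ∃ t : ℂ, u j = t • u i := Quotient.exact heq
    have hedge : gadgetRel G (Sum.inl i) (Sum.inl j) := hadj
    exact par_inner i j hrel (horth _ _ hedge)) with hC
  have hcard : Fintype.card (Quotient s) ≤ 3 := by
    set g : Quotient s → EuclideanSpace ℂ (GVert n) := fun q => u q.out with hg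
    have horthg : Orthonormal ℂ g := by
      rw [orthonormal_iff_ite]
      intro q q'
      by_cases h : q = q'
      · subst h; simp [hg, hu, hunit, -inner_self_eq_norm_sq_to_K]
      · rw [if_neg h]
        have hout : q.out ≠ q'.out := fun e => h (Quotient.out_injective e)
        rcases dich' q.out q'.out hout with h0 | hpar
        · exact h0
        · exfalso
          have heq := Quotient.sound (s := s) hpar
          rw [Quotient.out_eq, Quotient.out_eq] at heq
          exact h heq
    have hli : LinearIndependent ℂ g := horthg.linearIndependent
    set g' : Quotient s → W := fun q => ⟨g q, hmem _⟩ with hg'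
    have hli' : LinearIndependent ℂ g' := by
      apply LinearIndependent.of_comp W.subtype
      convert hli
      rfl
    calc Fintype.card (Quotient s) ≤ finrank ℂ W := hli'.fintype_card_le_finrank
      _ ≤ 3 := hWrank
  exact (C.colorable).mono hcard

end Aux

theorem stmt0 {n : ℕ} (G : SimpleGraph (Fin n)) :
    G.Colorable 3 ↔
      ∃ A : Matrix (GVert n) (GVert n) ℂ,
        A.PosSemidef ∧ A.rank ≤ 3 ∧ Fits (gadgetGraph G) A := by
  constructor
  · exact forwardDir
  · rintro ⟨A, hA, hrk, hF⟩
    exact reverseDir A hA hrk hF
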